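/- arXiv:1505.07742 — 8 statements merged into one kernel-verified Lean document; each statement's English description precedes it below -/
import Mathlib

section
/- For every real α with 0 < α < (√2 - 1)/2 there exists N ∈ ℕ such that for all n ≥ N and every natural number k with k ≤ ⌊αn⌋, one has the strict inequality C(n-k, k) < C(n-(k+1), k+1). -/
set_option maxHeartbeats 1000000

lemma key_choose (n k : ℕ) (h2k : 2*k < n)
    (hlt : (k+1)*(n-k) < (n-2*k)*(n-2*k-1)) :
    Nat.choose (n-k) k < Nat.choose (n-(k+1)) (k+1) := by
  set m := n - k with hm
  have hk : k ≤ m := by omega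
  have hm1 : 1 ≤ m := by omega
  have e1 : n - (k+1) = m - 1 := by omega
  have e2 : n - 2*k = m - k := by omega
  have e3 : n - 2*k - 1 = m - 1 - k := by omega
  rw [e1]
  have hpos : 0 < Nat.choose m k := Nat.choose_pos hk
  have id1 : Nat.choose (m-1) k * m = Nat.choose m k * (m - k) := by
    have := Nat.choose_mul_succ_eq (m-1) k
    simpa [Nat.sub_add_cancel hm1] using this
  have id2 : Nat.choose (m-1) (k+1) * (k+1) = Nat.choose (m-1) k * (m - 1 - k) :=
    Nat.choose_succ_right_eq (m-1) k
  have hmul : Nat.choose m k * ((k+1) * m) < Nat.choose (m-1) (k+1) * ((k+1) * m) := by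
    calc Nat.choose m k * ((k+1)*m) < Nat.choose m k * ((m-k)*(m-1-k)) := by
          apply (Nat.mul_lt_mul_left hpos).mpr
          rw [e2] at hlt
          have h3 : m - 1 - k = m - k - 1 := by omega
          rw [h3]
          exact hlt
      _ = Nat.choose m k * (m-k) * (m-1-k) := by ring
      _ = Nat.choose (m-1) k * m * (m-1-k) := by rw [id1]
      _ = Nat.choose (m-1) k * (m-1-k) * m := by ring
      _ = Nat.choose (m-1) (k+1) * (k+1) * m := by rw [id2]
      _ = Nat.choose (m-1) (k+1) * ((k+1)*m) := by ring
  exact Nat.lt_of_mul_lt_mul_right hmul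

/-- For every real `α` with `0 < α < (√2 - 1)/2` there exists `N ∈ ℕ` such that for all
`n ≥ N` and every natural number `k ≤ ⌊α·n⌋`, one has `C(n-k, k) < C(n-(k+1), k+1)`. -/
theorem choose_strict_mono_in_k (α : ℝ) (hα0 : 0 < α) (hα : α < (Real.sqrt 2 - 1) / 2) :
    ∃ N : ℕ, ∀ n : ℕ, N ≤ n → ∀ k : ℕ, k ≤ ⌊α * (n : ℝ)⌋₊ →
      Nat.choose (n - k) k < Nat.choose (n - (k + 1)) (k + 1) := by
  have hs2 : Real.sqrt 2 ^ 2 = 2 := Real.sq_sqrt (by norm_num)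
  have hs2nn : 0 ≤ Real.sqrt 2 := Real.sqrt_nonneg 2
  have hα4 : α < 1/4 := by nlinarith
  have hc : 0 < (1 - 4*α) * (1 - α) := by nlinarith
  let c : ℝ := (1 - 4*α) * (1 - α)
  obtain ⟨N, hN⟩ := exists_nat_gt (max (3 / (1 - 2*α)) ((2 - 2*α) / c + 1))
  refine ⟨N, fun n hn k hk => ?_⟩
  have hNn : (N : ℝ) ≤ n := by exact_mod_cast hn
  have h12α : (0:ℝ) < 1 - 2*α := by nlinarith
  have hn1 : 3 / (1 - 2*α) < (n:ℝ) := lt_of_le_of_lt (le_max_left _ _) (hN.trans_le hNn) |>.trans_le le_rfl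
  have hn2 : (2 - 2*α) / c + 1 < (n:ℝ) := lt_of_le_of_lt (le_max_right _ _) (hN.trans_le hNn)
  have hn3 : 3 < (1 - 2*α) * n := by
    rw [div_lt_iff₀ h12α] at hn1; linarith
  have hn4 : 2 - 2*α < ((1 - 4*α) * (1 - α)) * n := by
    have h := (div_lt_iff₀ hc).mp (by exact_mod_cast (by linarith : (2 - 2*α)/((1 - 4*α) * (1 - α)) < (n:ℝ)))
    nlinarith [h]
  have hnpos : (0:ℝ) < n := by nlinarith
  -- k ≤ α n
  have hkα : (k:ℝ) ≤ α * n := by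
    calc (k:ℝ) ≤ (⌊α * (n:ℝ)⌋₊ : ℝ) := by exact_mod_cast hk
      _ ≤ α * n := Nat.floor_le (by positivity)
  have hknn : (0:ℝ) ≤ k := Nat.cast_nonneg k
  have h2k : 2*k < n := by
    have : 2*(k:ℝ) < n := by nlinarith
    exact_mod_cast this
  apply key_choose n k h2k
  -- cast to reals
  have hc1 : ((n - k : ℕ) : ℝ) = (n:ℝ) - k := by
    rw [Nat.cast_sub (by omega)]
  have hc2 : ((n - 2*k : ℕ) : ℝ) = (n:ℝ) - 2*k := by
    rw [Nat.cast_sub (by omega)]; push_cast; ring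
  have hc3 : ((n - 2*k - 1 : ℕ) : ℝ) = (n:ℝ) - 2*k - 1 := by
    rw [Nat.cast_sub (by omega), hc2]; norm_num
  have : ((k:ℝ)+1)*((n:ℝ)-k) < ((n:ℝ)-2*k)*((n:ℝ)-2*k-1) := by
    have e1 : (1 - 2*α)*n ≤ (n:ℝ) - 2*k := by linarith
    have e2 : ((1-2*α)*n)*((1-2*α)*n - 1) ≤ ((n:ℝ)-2*k)*((n:ℝ)-2*k-1) :=
      mul_le_mul e1 (by linarith) (by linarith) (by linarith)
    have e3 : ((k:ℝ)+1)*((n:ℝ)-k) ≤ (α*n+1)*n := by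
      have hkn : (k:ℝ) ≤ n := by nlinarith [hkα, hα4, hnpos]
      have := mul_le_mul (by linarith : (k:ℝ)+1 ≤ α*n+1)
        (by linarith : (n:ℝ)-k ≤ n) (by linarith) (by positivity)
      linarith
    have e4 : (α*(n:ℝ)+1)*n < ((1-2*α)*n)*((1-2*α)*n - 1) := by
      have h := mul_pos hnpos (by linarith : (0:ℝ) < ((1 - 4*α) * (1 - α))*(n:ℝ) - (2-2*α))
      linarith [h]
    linarith
  have := this
  rw [← hc3, ← hc2, ← hc1] at this
  exact_mod_cast this
end

section
/- Let ω = (1+√5)/2 and β = (log ω)/2. There exist γ ∈ (0,1) and N ∈ ℕ such that for all n ≥ N, the cardinality of I(γ,n) satisfies #I(γ,n) ≤ e^{βn}. -/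
open scoped Classical

/-- The allowed transitions of the subshift: `1 → 1,2`, `2 → 3`, `3 → 1,2`. -/
def allowedTrans (x y : ℕ) : Prop :=
  (x = 1 ∧ (y = 1 ∨ y = 2)) ∨ (x = 2 ∧ y = 3) ∨ (x = 3 ∧ (y = 1 ∨ y = 2))

/-- The symbol (in `{1,2,3}`) at position `i` of a word encoded as `a : Fin n → Fin 3`. -/
def symb {n : ℕ} (a : Fin n → Fin 3) (i : Fin n) : ℕ := (a i : ℕ) + 1

/-- A word `(a_0, …, a_{n-1}) ∈ {1,2,3}^n` is admissible if consecutive symbols obey the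
allowed transitions. -/
def AdmissibleWord {n : ℕ} (a : Fin n → Fin 3) : Prop :=
  ∀ i : ℕ, (h : i + 1 < n) →
    allowedTrans (symb a ⟨i, Nat.lt_of_succ_lt h⟩) (symb a ⟨i + 1, h⟩)

/-- `I(γ,n)`: the set of admissible words of length `n` such that
`#{0 ≤ j ≤ n-1 : a_j ∈ {1,3}} > γ·n`. -/
noncomputable def Iset (γ : ℝ) (n : ℕ) : Finset (Fin n → Fin 3) :=
  Finset.univ.filter (fun a => AdmissibleWord a ∧
    γ * (n : ℝ) < ((Finset.univ.filter (fun i => symb a i = 1 ∨ symb a i = 3)).card : ℝ))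

lemma trans_det {x y y' : ℕ} (h : allowedTrans x y) (h' : allowedTrans x y')
    (hy : y ≠ 2) (hy' : y' ≠ 2) : y = y' := by
  unfold allowedTrans at h h'
  omega

/-- An admissible word is determined by its first letter and the set of positions of `2`s. -/
lemma adm_inj {n : ℕ} (hn : 0 < n) {a b : Fin n → Fin 3}
    (ha : AdmissibleWord a) (hb : AdmissibleWord b)
    (h0 : a ⟨0, hn⟩ = b ⟨0, hn⟩)
    (hS : Finset.univ.filter (fun i => symb a i = 2)
        = Finset.univ.filter (fun i => symb b i = 2)) : a = b := by
  have key : ∀ i (h : i < n), a ⟨i, h⟩ = b ⟨i, h⟩ := by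
    intro i
    induction i with
    | zero => intro h; exact h0
    | succ i ih =>
      intro h
      have hi : i < n := Nat.lt_of_succ_lt h
      have hmem : (symb a ⟨i+1, h⟩ = 2) ↔ (symb b ⟨i+1, h⟩ = 2) := by
        have := Finset.ext_iff.mp hS ⟨i+1, h⟩
        simpa using this
      by_cases hc : symb a ⟨i+1, h⟩ = 2
      · have hc' : symb b ⟨i+1, h⟩ = 2 := hmem.mp hc
        unfold symb at hc hc'
        exact Fin.ext (by omega)
      · have hc' : ¬ symb b ⟨i+1, h⟩ = 2 := fun hh => hc (hmem.mpr hh)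
        have hta := ha i h
        have htb := hb i h
        have hprev : symb a ⟨i, Nat.lt_of_succ_lt h⟩ = symb b ⟨i, Nat.lt_of_succ_lt h⟩ := by
          unfold symb; rw [ih hi]
        rw [hprev] at hta
        have heq := trans_det hta htb hc hc'
        unfold symb at heq
        exact Fin.ext (by omega)
  funext j
  have := key j.1 j.2
  simpa using this

lemma card_Iset_le (n : ℕ) (hn : 0 < n) :
    (Iset (19/20) n).card ≤ 3 * ∑ k ∈ Finset.range (n/20 + 1), n.choose k := by
  classical
  set m := n / 20 with hm
  set T : Finset (Fin 3 × Finset (Fin n)) :=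
    Finset.univ ×ˢ ((Finset.range (m+1)).biUnion
      (fun k => Finset.powersetCard k (Finset.univ : Finset (Fin n)))) with hT
  have hcard : (Iset (19/20) n).card ≤ T.card := by
    apply Finset.card_le_card_of_injOn
      (fun a => (a ⟨0, hn⟩, Finset.univ.filter (fun i => symb a i = 2)))
    · intro a haI
      rw [Iset, Finset.mem_coe, Finset.mem_filter] at haI
      rw [Finset.mem_coe]
      obtain ⟨-, hadm, hcount⟩ := haI
      refine Finset.mem_product.mpr ⟨Finset.mem_univ _, ?_⟩
      rw [Finset.mem_biUnion]
      set S := Finset.univ.filter (fun i => symb a i = 2) with hSdef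
      set t := (Finset.univ.filter (fun i => symb a i = 1 ∨ symb a i = 3)).card with ht
      have hpart : S.card + t = n := by
        have hco : Finset.univ.filter (fun i => symb a i = 1 ∨ symb a i = 3)
            = Finset.univ.filter (fun i => ¬ (symb a i = 2)) := by
          apply Finset.filter_congr
          intro i _
          have h3 : (a i : ℕ) < 3 := (a i).2
          unfold symb
          constructor
          · intro hh; omega
          · intro hh; omega
        rw [ht, hco, hSdef, Finset.card_filter_add_card_filter_not]
        simp
      have htn : 19 * n < 20 * t := by
        have : (19:ℝ) * n < 20 * t := by
          have := hcount
          push_cast at this ⊢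
          linarith
        exact_mod_cast this
      have hScard : S.card ≤ m := by
        rw [hm]
        omega
      exact ⟨S.card, Finset.mem_range.mpr (Nat.lt_succ_of_le hScard),
        Finset.mem_powersetCard_univ.mpr rfl⟩
    · intro a haI b hbI hab
      rw [Iset, Finset.coe_filter, Set.mem_setOf_eq] at haI hbI
      have h1 := congrArg Prod.fst hab
      have h2 := congrArg Prod.snd hab
      simp only at h1 h2
      exact adm_inj hn haI.2.1 hbI.2.1 h1 h2
  refine hcard.trans ?_
  rw [hT, Finset.card_product]
  have : ((Finset.range (m+1)).biUnion
      (fun k => Finset.powersetCard k (Finset.univ : Finset (Fin n)))).card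
      ≤ ∑ k ∈ Finset.range (m+1), n.choose k := by
    refine (Finset.card_biUnion_le).trans ?_
    apply Finset.sum_le_sum
    intro k _
    rw [Finset.card_powersetCard]
    simp
  have h3 : (Finset.univ : Finset (Fin 3)).card = 3 := by simp
  rw [h3]
  exact Nat.mul_le_mul_left 3 this

lemma sum_choose_le (n m : ℕ) (hmn : m ≤ n) :
    (∑ k ∈ Finset.range (m+1), (n.choose k : ℝ)) ≤ 10^m * (11/10)^n := by
  have hpow : ((11:ℝ)/10)^n
      = ∑ k ∈ Finset.range (n+1), (1/10:ℝ)^k * 1^(n-k) * (n.choose k : ℝ) := by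
    rw [← add_pow]
    norm_num
  have step1 : (∑ k ∈ Finset.range (m+1), (n.choose k : ℝ))
      ≤ 10^m * ∑ k ∈ Finset.range (m+1), (1/10:ℝ)^k * 1^(n-k) * (n.choose k : ℝ) := by
    rw [Finset.mul_sum]
    apply Finset.sum_le_sum
    intro k hk
    have hk' : k ≤ m := Nat.lt_succ_iff.mp (Finset.mem_range.mp hk)
    have h1 : (10:ℝ)^k ≤ 10^m := pow_le_pow_right₀ (by norm_num) hk'
    have h2 : (1:ℝ) ≤ 10^m * (1/10)^k := by
      rw [one_div, inv_pow, ← div_eq_mul_inv, le_div_iff₀ (by positivity)]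
      simpa using h1
    have hc : (0:ℝ) ≤ (n.choose k : ℝ) := Nat.cast_nonneg _
    calc (n.choose k : ℝ) = 1 * (n.choose k : ℝ) := by ring
      _ ≤ (10^m * (1/10)^k) * (n.choose k : ℝ) := by
          apply mul_le_mul_of_nonneg_right h2 hc
      _ = 10^m * ((1/10:ℝ)^k * 1^(n-k) * (n.choose k : ℝ)) := by ring
  refine step1.trans ?_
  apply mul_le_mul_of_nonneg_left ?_ (by positivity)
  rw [hpow]
  apply Finset.sum_le_sum_of_subset_of_nonneg
  · exact Finset.range_subset_range.mpr (by omega)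
  · intro k _ _
    positivity

lemma sqrt5_lb : (11/5 : ℝ) ≤ Real.sqrt 5 := by
  nlinarith [Real.sq_sqrt (by norm_num : (5:ℝ) ≥ 0), Real.sqrt_nonneg 5]

lemma key_log : Real.log 3 + 5 * Real.log 10 + 100 * Real.log (11/10)
    ≤ 50 * Real.log (8/5) := by
  have h : Real.log ((3:ℝ) * 10^5 * (11/10)^100) ≤ Real.log ((8/5:ℝ)^50) := by
    apply Real.log_le_log (by positivity)
    norm_num
  rw [Real.log_mul (by positivity) (by positivity),
    Real.log_mul (by positivity) (by positivity),
    Real.log_pow, Real.log_pow, Real.log_pow] at h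
  push_cast at h
  linarith

lemma exponent_bound {n : ℕ} (hn : 100 ≤ n) :
    Real.log 3 + ((n/20 : ℕ) : ℝ) * Real.log 10 + (n : ℝ) * Real.log (11/10)
      ≤ (Real.log ((1 + Real.sqrt 5) / 2) / 2) * n := by
  have h100 : (100:ℝ) ≤ (n:ℝ) := by exact_mod_cast hn
  have hm : ((n/20 : ℕ) : ℝ) ≤ (n:ℝ)/20 := Nat.cast_div_le
  have hlog3 : (0:ℝ) ≤ Real.log 3 := Real.log_nonneg (by norm_num)
  have hlog10 : (0:ℝ) ≤ Real.log 10 := Real.log_nonneg (by norm_num)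
  have hlog11 : (0:ℝ) ≤ Real.log (11/10) := Real.log_nonneg (by norm_num)
  have homega : Real.log (8/5) ≤ Real.log ((1 + Real.sqrt 5) / 2) := by
    apply Real.log_le_log (by norm_num)
    nlinarith [sqrt5_lb]
  have hlog85 : (0:ℝ) ≤ Real.log (8/5) := Real.log_nonneg (by norm_num)
  have key := key_log
  nlinarith [mul_le_mul_of_nonneg_left key (by linarith : (0:ℝ) ≤ (n:ℝ)/100),
    mul_le_mul_of_nonneg_right homega (by linarith : (0:ℝ) ≤ (n:ℝ)/2),
    mul_le_mul_of_nonneg_right hm hlog10,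
    mul_le_mul_of_nonneg_left hlog3 (by linarith : (0:ℝ) ≤ (n:ℝ)/100 - 1)]

/-- Let `ω = (1+√5)/2` and `β = (log ω)/2`. There exist `γ ∈ (0,1)` and `N ∈ ℕ` such that
for all `n ≥ N`, `#I(γ,n) ≤ e^{βn}`. -/
theorem card_Iset_le_exp :
    ∃ γ : ℝ, 0 < γ ∧ γ < 1 ∧ ∃ N : ℕ, ∀ n : ℕ, N ≤ n →
      ((Iset γ n).card : ℝ) ≤
        Real.exp ((Real.log ((1 + Real.sqrt 5) / 2) / 2) * n) := by
  refine ⟨19/20, by norm_num, by norm_num, 100, fun n hn => ?_⟩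
  have hn0 : 0 < n := by omega
  set m := n / 20 with hm
  have hm' : m ≤ n := Nat.div_le_self _ _
  have step1 : ((Iset (19/20) n).card : ℝ) ≤ 3 * ∑ k ∈ Finset.range (m+1), (n.choose k : ℝ) := by
    have := card_Iset_le n hn0
    have hcast : (((3 * ∑ k ∈ Finset.range (m+1), n.choose k : ℕ)) : ℝ)
        = 3 * ∑ k ∈ Finset.range (m+1), (n.choose k : ℝ) := by push_cast; ring
    calc ((Iset (19/20) n).card : ℝ) ≤ ((3 * ∑ k ∈ Finset.range (m+1), n.choose k : ℕ) : ℝ) := by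
          exact_mod_cast this
      _ = _ := hcast
  have step2 : (3:ℝ) * ∑ k ∈ Finset.range (m+1), (n.choose k : ℝ)
      ≤ 3 * (10^m * (11/10)^n) := by
    have := sum_choose_le n m hm'
    linarith
  refine step1.trans (step2.trans ?_)
  have hpos : (0:ℝ) < 3 * (10^m * (11/10)^n) := by positivity
  rw [← Real.exp_log hpos]
  apply Real.exp_le_exp.mpr
  rw [Real.log_mul (by norm_num) (by positivity), Real.log_mul (by positivity) (by positivity),
    Real.log_pow, Real.log_pow]
  have := exponent_bound hn
  push_cast
  linarith [this]
end

section
/- Let 0 < σ < 1/3, γ ∈ (0,1) and c > 0 satisfy (1-γ)·log(1/σ) - γ > 4c. Set A = log(1/σ), θ = 2c/(A - 2c), and define weights w(1) = w(3) = -1 and w(2) = log(1/σ). Then for every n ≥ 1 and every word (a_0, …, a_{n-1}) ∈ {1,2,3}^n with #{j : a_j = 2} ≥ (1-γ)n, there exist an integer l ≥ θn and integers 1 ≤ n_1 < ⋯ < n_l ≤ n such that for every i = 1, …, l and every 0 ≤ k ≤ n_i - 1 one has Σ_{j=k}^{n_i - 1} w(a_j) ≥ 2c·(n_i - k). -/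
/-- Pliss-type abundance of hyperbolic times for words with a large proportion of symbols `2`.
The weights are `w(1) = w(3) = -1` and `w(2) = log(1/σ)`. -/
theorem pliss_hyperbolic_times (σ γ c : ℝ) (hσ0 : 0 < σ) (hσ : σ < 1 / 3)
    (hγ0 : 0 < γ) (hγ1 : γ < 1) (hc : 0 < c)
    (hcond : (1 - γ) * Real.log (1 / σ) - γ > 4 * c)
    (n : ℕ) (hn : 1 ≤ n) (a : ℕ → ℕ)
    (ha : ∀ j < n, a j = 1 ∨ a j = 2 ∨ a j = 3)
    (hcount : (1 - γ) * (n : ℝ) ≤ (((Finset.range n).filter (fun j => a j = 2)).card : ℝ)) :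
    ∃ l : ℕ, (2 * c / (Real.log (1 / σ) - 2 * c)) * (n : ℝ) ≤ (l : ℝ) ∧
      ∃ ns : Fin l → ℕ, StrictMono ns ∧ (∀ i, 1 ≤ ns i ∧ ns i ≤ n) ∧
        ∀ i : Fin l, ∀ k : ℕ, k ≤ ns i - 1 →
          2 * c * ((ns i : ℝ) - (k : ℝ)) ≤
            ∑ j ∈ Finset.Icc k (ns i - 1),
              (if a j = 2 then Real.log (1 / σ) else (-1 : ℝ)) := by
  classical
  set A := Real.log (1 / σ) with hA
  have hA0 : 0 < A := Real.log_pos (one_lt_one_div hσ0 (by linarith))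
  have hA4c : 4 * c < A := by nlinarith [mul_pos hγ0 hA0]
  have hB : (0:ℝ) < A - 2 * c := by linarith
  set f : ℕ → ℝ := fun j => if a j = 2 then A else (-1:ℝ) with hf
  set S : ℕ → ℝ := fun m => ∑ j ∈ Finset.range m, (f j - 2 * c) with hS
  have hgB : ∀ j, f j - 2 * c ≤ A - 2 * c := by
    intro j
    simp only [hf]
    split <;> linarith
  set p : ℕ → Prop := fun i => ∀ k < i, S k ≤ S i with hp
  -- partial sums of f
  have hfr : ∀ q : ℕ, ∑ j ∈ Finset.range q, f j = S q + 2 * c * q := by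
    intro q
    simp only [hS, Finset.sum_sub_distrib, Finset.sum_const, Finset.card_range,
      nsmul_eq_mul]
    ring
  -- key counting estimate
  have key : ∀ m, ∀ k ≤ m,
      S k ≤ (((Finset.Icc 1 m).filter p).card : ℝ) * (A - 2 * c) := by
    intro m
    induction m with
    | zero =>
      intro k hk
      interval_cases k
      simp only [hS, Finset.range_zero, Finset.sum_empty]
      exact mul_nonneg (Nat.cast_nonneg _) hB.le
    | succ m ih =>
      have hmono : (((Finset.Icc 1 m).filter p).card : ℝ)
          ≤ (((Finset.Icc 1 (m+1)).filter p).card : ℝ) := by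
        exact_mod_cast Finset.card_le_card
          (Finset.filter_subset_filter _ (Finset.Icc_subset_Icc_right (Nat.le_succ m)))
      intro k hk
      rcases eq_or_lt_of_le hk with h | h
      · subst h
        by_cases hpm : p (m+1)
        · have hmem : (m+1) ∈ (Finset.Icc 1 (m+1)).filter p := by
            rw [Finset.mem_filter, Finset.mem_Icc]
            exact ⟨⟨by omega, le_rfl⟩, hpm⟩
          have hsub : (Finset.Icc 1 m).filter p ⊂ (Finset.Icc 1 (m+1)).filter p := by
            refine ⟨Finset.filter_subset_filter _
              (Finset.Icc_subset_Icc_right (Nat.le_succ m)), fun hcon => ?_⟩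
            have := hcon hmem
            simp [Finset.mem_filter, Finset.mem_Icc] at this
          have hcard : ((Finset.Icc 1 m).filter p).card + 1
              ≤ ((Finset.Icc 1 (m+1)).filter p).card := Finset.card_lt_card hsub
          have hcardR : (((Finset.Icc 1 m).filter p).card : ℝ) + 1
              ≤ (((Finset.Icc 1 (m+1)).filter p).card : ℝ) := by exact_mod_cast hcard
          have hstep : S (m+1) = S m + (f m - 2 * c) := by
            simp only [hS, Finset.sum_range_succ]
          have h1 := ih m le_rfl
          have h2 := hgB m
          nlinarith
        · simp only [hp] at hpm
          push_neg at hpm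
          obtain ⟨k', hk', hlt⟩ := hpm
          have := ih k' (Nat.lt_succ_iff.mp hk')
          nlinarith
      · have := ih k (Nat.lt_succ_iff.mp h)
        nlinarith
  -- lower bound on S n
  set C := ((Finset.range n).filter (fun j => a j = 2)).card with hC
  have hCn : C ≤ n := by
    simpa [hC] using Finset.card_filter_le (Finset.range n) (fun j => a j = 2)
  have hsplit : ∑ j ∈ Finset.range n, f j = (C:ℝ) * (A + 1) - n := by
    have h1 : ∑ j ∈ Finset.range n, f j
        = ∑ j ∈ (Finset.range n).filter (fun j => a j = 2), f j
          + ∑ j ∈ (Finset.range n).filter (fun j => ¬ a j = 2), f j :=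
      (Finset.sum_filter_add_sum_filter_not (Finset.range n) (fun j => a j = 2) f).symm
    have h2 : ∑ j ∈ (Finset.range n).filter (fun j => a j = 2), f j = (C:ℝ) * A := by
      rw [Finset.sum_congr rfl (fun j hj => show f j = A from by
          have := (Finset.mem_filter.mp hj).2
          simp [hf, this]),
        Finset.sum_const, nsmul_eq_mul]
    have h3 : ∑ j ∈ (Finset.range n).filter (fun j => ¬ a j = 2), f j
        = -(((Finset.range n).filter (fun j => ¬ a j = 2)).card : ℝ) := by
      rw [Finset.sum_congr rfl (fun j hj => show f j = -1 from by
          have := (Finset.mem_filter.mp hj).2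
          simp [hf, this]),
        Finset.sum_const, nsmul_eq_mul]
      ring
    have h4 : C + ((Finset.range n).filter (fun j => ¬ a j = 2)).card = n := by
      simpa [hC] using
        Finset.card_filter_add_card_filter_not
          (s := Finset.range n) (p := fun j => a j = 2)
    have h4R : (((Finset.range n).filter (fun j => ¬ a j = 2)).card : ℝ) = (n:ℝ) - C := by
      have := congrArg (fun x : ℕ => (x : ℝ)) h4
      push_cast at this
      linarith
    rw [h1, h2, h3, h4R]; ring
  have hSn : 2 * c * n ≤ S n := by
    have h1 : S n = (C:ℝ) * (A + 1) - n - 2 * c * n := by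
      have := hfr n
      linarith [hsplit]
    have h2 : (1 - γ) * (n:ℝ) * (A + 1) ≤ (C:ℝ) * (A + 1) :=
      mul_le_mul_of_nonneg_right hcount (by linarith)
    have hn0 : (0:ℝ) ≤ n := Nat.cast_nonneg n
    nlinarith
  -- the Pliss set
  set P := (Finset.Icc 1 n).filter p with hP
  refine ⟨P.card, ?_, fun i => P.orderEmbOfFin rfl i,
    (P.orderEmbOfFin rfl).strictMono, ?_, ?_⟩
  · rw [div_mul_eq_mul_div, div_le_iff₀ hB]
    have := key n n le_rfl
    nlinarith
  · intro i
    have hmem : P.orderEmbOfFin rfl i ∈ P := P.orderEmbOfFin_mem rfl i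
    have := (Finset.mem_filter.mp hmem).1
    exact Finset.mem_Icc.mp this
  · intro i k hk
    set m := P.orderEmbOfFin rfl i with hm
    have hmem : m ∈ P := P.orderEmbOfFin_mem rfl i
    obtain ⟨hmIcc, hpm⟩ := Finset.mem_filter.mp hmem
    obtain ⟨hm1, hmn⟩ := Finset.mem_Icc.mp hmIcc
    have hk' : k ≤ m - 1 := hk
    have hkm : k < m := by omega
    have hIcc : Finset.Icc k (m - 1) = Finset.Ico k m := by
      rw [← Finset.Ico_add_one_right_eq_Icc]
      congr 1
      omega
    have hval : ∑ j ∈ Finset.Icc k (m - 1), (if a j = 2 then A else (-1:ℝ))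
        = ∑ j ∈ Finset.Ico k m, f j := by
      rw [hIcc]
    rw [hval, Finset.sum_Ico_eq_sub f hkm.le, hfr, hfr]
    have hSkm : S k ≤ S m := hpm k hkm
    have hkmR : (k:ℝ) ≤ (m:ℝ) := by exact_mod_cast hkm.le
    linarith
end

section
/- Let X be a Polish space, μ a finite Borel measure on X, G : X → X continuous, and J : X → [0, ∞) a Borel function such that μ(G(A)) = ∫_A J dμ for every Borel set A on which G is injective. Then for every n ≥ 1 and every Borel set A on which G^n is injective, μ(G^n(A)) = ∫_A Π_{j=0}^{n-1} J(G^j(x)) dμ(x). -/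
open MeasureTheory

/-- If `J` is a Jacobian of the finite Borel measure `μ` with respect to the continuous map
`G` on a Polish space, then `Π_{j<n} J ∘ G^j` is a Jacobian of `μ` with respect to `G^n`. -/
theorem jacobian_iterate {X : Type*} [TopologicalSpace X] [PolishSpace X]
    [MeasurableSpace X] [BorelSpace X]
    (μ : Measure X) [IsFiniteMeasure μ] (G : X → X) (hG : Continuous G)
    (J : X → ℝ) (hJm : Measurable J) (hJ0 : ∀ x, 0 ≤ J x)
    (hJac : ∀ A : Set X, MeasurableSet A → Set.InjOn G A →
      μ (G '' A) = ∫⁻ x in A, ENNReal.ofReal (J x) ∂μ) :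
    ∀ n : ℕ, 1 ≤ n → ∀ A : Set X, MeasurableSet A → Set.InjOn (G^[n]) A →
      μ (G^[n] '' A) =
        ∫⁻ x in A, ENNReal.ofReal (∏ j ∈ Finset.range n, J (G^[j] x)) ∂μ := by
  intro n hn
  induction n, hn using Nat.le_induction with
  | base =>
    intro A hA hinj
    simpa using hJac A hA (by simpa using hinj)
  | succ n hn IH =>
    intro A hA hinj
    set ρ : X → ENNReal := fun x => ENNReal.ofReal (∏ j ∈ Finset.range n, J (G^[j] x)) with hρ
    have hGn : Continuous (G^[n]) := hG.iterate n
    have hGnm : Measurable (G^[n]) := hGn.measurable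
    have hρm : Measurable ρ := by
      apply Measurable.ennreal_ofReal
      exact Finset.measurable_prod _ fun j _ => hJm.comp (hG.iterate j).measurable
    have hinjn : Set.InjOn (G^[n]) A := by
      intro x hx y hy h
      apply hinj hx hy
      simp only [Function.iterate_succ', Function.comp_apply, h]
    have hB : MeasurableSet (G^[n] '' A) :=
      hA.image_of_continuousOn_injOn hGn.continuousOn hinjn
    have hinjG : Set.InjOn G (G^[n] '' A) := by
      rintro _ ⟨x, hx, rfl⟩ _ ⟨y, hy, rfl⟩ h
      have h2 : G^[n+1] x = G^[n+1] y := by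
        rw [Function.iterate_succ_apply', Function.iterate_succ_apply']; exact h
      exact congrArg _ (hinj hx hy h2)
    have hmap : Measure.map (G^[n]) ((μ.restrict A).withDensity ρ) = μ.restrict (G^[n] '' A) := by
      ext S hS
      rw [Measure.map_apply hGnm hS, withDensity_apply _ (hGnm hS),
        Measure.restrict_restrict (hGnm hS), Measure.restrict_apply hS]
      have him : G^[n] '' (G^[n] ⁻¹' S ∩ A) = S ∩ G^[n] '' A := by
        ext y; constructor
        · rintro ⟨x, ⟨hxS, hxA⟩, rfl⟩; exact ⟨hxS, x, hxA, rfl⟩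
        · rintro ⟨hyS, x, hxA, rfl⟩; exact ⟨x, ⟨hyS, hxA⟩, rfl⟩
      rw [← him, IH _ ((hGnm hS).inter hA) (hinjn.mono Set.inter_subset_right)]
    have himage : G^[n+1] '' A = G '' (G^[n] '' A) := by
      rw [Function.iterate_succ', Set.image_comp]
    rw [himage, hJac _ hB hinjG]
    have : ∫⁻ x in G^[n] '' A, ENNReal.ofReal (J x) ∂μ
        = ∫⁻ x, ENNReal.ofReal (J x) ∂(μ.restrict (G^[n] '' A)) := rfl
    have hg : Measurable (fun a => ENNReal.ofReal (J (G^[n] a))) :=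
      (hJm.comp hGnm).ennreal_ofReal
    rw [this, ← hmap, lintegral_map hJm.ennreal_ofReal hGnm,
      lintegral_withDensity_eq_lintegral_mul _ hρm hg]
    refine lintegral_congr fun x => ?_
    simp only [Pi.mul_apply, hρ]
    rw [Finset.prod_range_succ, ENNReal.ofReal_mul (Finset.prod_nonneg fun j _ => hJ0 _)]
end

section
/- Let X be a compact metric space, G : X → X a continuous map such that G^{-1}({x}) is finite for every x ∈ X, φ : X → ℝ continuous, ν a Borel probability measure on X, and λ > 0. Suppose that for every bounded Borel function ψ : X → ℝ one has ∫_X ( Σ_{y ∈ G^{-1}({x})} e^{φ(y)} ψ(y) ) dν(x) = λ ∫_X ψ dν. Then for every Borel set A on which G is injective, ν(G(A)) = ∫_A λ·e^{-φ} dν; that is, λ·e^{-φ} is a Jacobian of ν with respect to G, and ν is a conformal measure. -/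
open MeasureTheory

/-- If `ν` is an eigenmeasure of the dual transfer operator, `L_φ* ν = λ ν`, then
`λ·e^{-φ}` is a Jacobian of `ν` with respect to `G`: `ν` is a conformal measure. -/
theorem conformal_measure_jacobian {X : Type*} [MetricSpace X] [CompactSpace X]
    [MeasurableSpace X] [BorelSpace X]
    (G : X → X) (hG : Continuous G) (hfin : ∀ x : X, (G ⁻¹' {x}).Finite)
    (φ : X → ℝ) (hφ : Continuous φ)
    (ν : Measure X) [IsProbabilityMeasure ν] (lam : ℝ) (hlam : 0 < lam)
    (hdual : ∀ ψ : X → ℝ, Measurable ψ → (∃ M : ℝ, ∀ x, |ψ x| ≤ M) →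
      ∫ x, (∑ y ∈ (hfin x).toFinset, Real.exp (φ y) * ψ y) ∂ν = lam * ∫ x, ψ x ∂ν) :
    ∀ A : Set X, MeasurableSet A → Set.InjOn G A →
      ν (G '' A) = ∫⁻ x in A, ENNReal.ofReal (lam * Real.exp (-φ x)) ∂ν := by
  intro A hA hinj
  classical
  have hGA : MeasurableSet (G '' A) :=
    hA.image_of_continuousOn_injOn hG.continuousOn hinj
  set ψ : X → ℝ := A.indicator (fun y => Real.exp (-φ y)) with hψdef
  have hcont : Continuous (fun y => Real.exp (-φ y)) := (Real.continuous_exp.comp hφ.neg)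
  have hψm : Measurable ψ := hcont.measurable.indicator hA
  have hbd : ∃ M : ℝ, ∀ x, |ψ x| ≤ M := by
    obtain ⟨M, hM⟩ := (isCompact_univ.image hcont).bddAbove
    refine ⟨max M 0, fun x => ?_⟩
    have hnn : 0 ≤ ψ x := Set.indicator_nonneg (fun y _ => (Real.exp_pos _).le) x
    rw [abs_of_nonneg hnn]
    by_cases hx : x ∈ A
    · rw [hψdef, Set.indicator_of_mem hx]
      exact le_trans (hM ⟨x, trivial, rfl⟩) (le_max_left M 0)
    · rw [hψdef, Set.indicator_of_notMem hx]
      exact le_max_right M 0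
  have key := hdual ψ hψm hbd
  -- pointwise computation of the transfer sum
  have hS : ∀ x, (∑ y ∈ (hfin x).toFinset, Real.exp (φ y) * ψ y)
      = (G '' A).indicator 1 x := by
    intro x
    have hterm : ∀ y ∈ (hfin x).toFinset, Real.exp (φ y) * ψ y
        = if y ∈ A then (1 : ℝ) else 0 := by
      intro y _
      simp only [hψdef, Set.indicator]
      split_ifs
      · rw [← Real.exp_add]; simp
      · ring
    rw [Finset.sum_congr rfl hterm, Finset.sum_ite, Finset.sum_const, Finset.sum_const_zero,
      add_zero, nsmul_eq_mul, mul_one]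
    by_cases hx : x ∈ G '' A
    · obtain ⟨a, haA, haG⟩ := hx
      have : ((hfin x).toFinset.filter (fun y => y ∈ A)) = {a} := by
        ext y
        simp only [Finset.mem_filter, Set.Finite.mem_toFinset, Set.mem_preimage,
          Set.mem_singleton_iff, Finset.mem_singleton]
        constructor
        · rintro ⟨hy, hyA⟩
          exact hinj hyA haA (hy.trans haG.symm)
        · rintro rfl
          exact ⟨haG, haA⟩
      have hmem : x ∈ G '' A := ⟨a, haA, haG⟩
      rw [this, Set.indicator_of_mem hmem, Pi.one_apply, Finset.card_singleton, Nat.cast_one]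
    · have : ((hfin x).toFinset.filter (fun y => y ∈ A)) = ∅ := by
        ext y
        simp only [Finset.mem_filter, Set.Finite.mem_toFinset, Set.mem_preimage,
          Set.mem_singleton_iff, Finset.notMem_empty, iff_false, not_and]
        intro hy hyA
        exact hx ⟨y, hyA, hy⟩
      rw [this, Set.indicator_of_notMem hx, Finset.card_empty, Nat.cast_zero]
  rw [show (fun x => ∑ y ∈ (hfin x).toFinset, Real.exp (φ y) * ψ y)
      = (G '' A).indicator 1 from funext hS] at key
  rw [integral_indicator_one hGA] at key
  -- Integrability of the integrand
  have hcont2 : Continuous (fun x => lam * Real.exp (-φ x)) := continuous_const.mul hcont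
  have hint : Integrable (fun x => lam * Real.exp (-φ x)) ν :=
    hcont2.integrable_of_hasCompactSupport (HasCompactSupport.of_compactSpace _)
  have hlin : (∫⁻ x in A, ENNReal.ofReal (lam * Real.exp (-φ x)) ∂ν)
      = ENNReal.ofReal (∫ x in A, lam * Real.exp (-φ x) ∂ν) := by
    rw [ofReal_integral_eq_lintegral_ofReal (hint.restrict)
      (Filter.Eventually.of_forall fun x => by positivity)]
  rw [hlin]
  have : (∫ x in A, lam * Real.exp (-φ x) ∂ν) = lam * ∫ x, ψ x ∂ν := by
    rw [hψdef, integral_indicator hA, integral_const_mul]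
  rw [this, ← key, measureReal_def, ENNReal.ofReal_toReal (measure_ne_top ν _)]
end

section
/- Let E be a real Banach space, L : E → E a bounded linear operator, λ > 0, and (T_k)_{k ≥ 0} a sequence in E such that sup_k ‖λ^{-k} T_k‖ < ∞ and ‖λ^{-k}(L T_k - T_{k+1})‖ → 0 as k → ∞. For n ≥ 1 set h_n = (1/n)·Σ_{i=0}^{n-1} λ^{-i} T_i. Then every accumulation point h of the sequence (h_n) (i.e. any limit of a subsequence h_{n_k} with n_k → ∞) satisfies L h = λ h. -/
open Filter Finset

private lemma key_identity {E : Type*} [NormedAddCommGroup E] [NormedSpace ℝ E]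
    (L : E →L[ℝ] E) (lam : ℝ) (hlam : 0 < lam) (T : ℕ → E) (n : ℕ) :
    L (∑ i ∈ range n, (lam ^ i)⁻¹ • T i) - lam • ∑ i ∈ range n, (lam ^ i)⁻¹ • T i
      = (∑ i ∈ range n, (lam ^ i)⁻¹ • (L (T i) - T (i + 1)))
        + (lam • ((lam ^ n)⁻¹ • T n) - lam • T 0) := by
  induction n with
  | zero => simp
  | succ n ih =>
    have hsc : lam • ((lam ^ (n+1))⁻¹ • T (n+1)) = (lam ^ n)⁻¹ • T (n+1) := by
      rw [smul_smul]
      congr 1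
      field_simp [pow_succ]
      ring
    rw [sum_range_succ, map_add, map_smul, smul_add, sum_range_succ]
    rw [hsc]
    have hsc2 : lam • ((lam ^ n)⁻¹ • T n) = lam • (lam ^ n)⁻¹ • T n := rfl
    rw [show ∀ a b c d : E, (a + b) - (c + d) = (a - c) + (b - d) by intros; abel]
    rw [ih]
    simp only [smul_sub]
    abel

/-- Let `L` be a bounded operator on a Banach space, `λ > 0`, and `(T_k)` a sequence with
`sup_k ‖λ^{-k} T_k‖ < ∞` and `‖λ^{-k}(L T_k - T_{k+1})‖ → 0`. Then every accumulation
point `h` of `h_n = (1/n)·Σ_{i=0}^{n-1} λ^{-i} T_i` satisfies `L h = λ h`. -/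
theorem accumulation_point_is_eigenvector {E : Type*} [NormedAddCommGroup E]
    [NormedSpace ℝ E] [CompleteSpace E]
    (L : E →L[ℝ] E) (lam : ℝ) (hlam : 0 < lam) (T : ℕ → E)
    (hbdd : ∃ M : ℝ, ∀ k : ℕ, ‖(lam ^ k)⁻¹ • T k‖ ≤ M)
    (hto : Filter.Tendsto (fun k : ℕ => ‖(lam ^ k)⁻¹ • (L (T k) - T (k + 1))‖)
      Filter.atTop (nhds 0))
    (h : E) (nk : ℕ → ℕ) (hmono : StrictMono nk)
    (hconv : Filter.Tendsto
      (fun j : ℕ => ((nk j : ℝ))⁻¹ • ∑ i ∈ Finset.range (nk j), (lam ^ i)⁻¹ • T i)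
      Filter.atTop (nhds h)) :
    L h = lam • h := by
  obtain ⟨M, hM⟩ := hbdd
  set hn : ℕ → E := fun n => (n : ℝ)⁻¹ • ∑ i ∈ range n, (lam ^ i)⁻¹ • T i with hn_def
  -- the defect sequence tends to 0
  have hu : Tendsto (fun k : ℕ => (lam ^ k)⁻¹ • (L (T k) - T (k + 1))) atTop (nhds 0) :=
    tendsto_zero_iff_norm_tendsto_zero.mpr hto
  have hD : Tendsto (fun n : ℕ => (n : ℝ)⁻¹ •
      ∑ i ∈ range n, (lam ^ i)⁻¹ • (L (T i) - T (i + 1))) atTop (nhds 0) :=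
    hu.cesaro_smul
  -- boundary term tends to 0
  have hB : Tendsto (fun n : ℕ => (n : ℝ)⁻¹ •
      (lam • ((lam ^ n)⁻¹ • T n) - lam • T 0)) atTop (nhds 0) := by
    rw [tendsto_zero_iff_norm_tendsto_zero]
    apply squeeze_zero (fun n => norm_nonneg _)
      (g := fun n : ℕ => (n : ℝ)⁻¹ * (lam * M + lam * ‖T 0‖))
    · intro n
      rw [norm_smul, Real.norm_eq_abs]
      have h1 : ‖lam • ((lam ^ n)⁻¹ • T n) - lam • T 0‖ ≤ lam * M + lam * ‖T 0‖ := by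
        refine (norm_sub_le _ _).trans ?_
        gcongr
        · rw [norm_smul, Real.norm_eq_abs, abs_of_pos hlam]
          have := hM n
          nlinarith [norm_nonneg ((lam ^ n)⁻¹ • T n)]
        · rw [norm_smul, Real.norm_eq_abs, abs_of_pos hlam]
      calc |(n:ℝ)⁻¹| * ‖lam • ((lam ^ n)⁻¹ • T n) - lam • T 0‖
          ≤ |(n:ℝ)⁻¹| * (lam * M + lam * ‖T 0‖) := by gcongr
        _ = (n:ℝ)⁻¹ * (lam * M + lam * ‖T 0‖) := by
            rw [abs_of_nonneg (by positivity)]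
    · simpa using (tendsto_inv_atTop_nhds_zero_nat).mul_const (lam * M + lam * ‖T 0‖)
  -- hence L (hn n) - lam • hn n → 0
  have hf : Tendsto (fun n : ℕ => L (hn n) - lam • hn n) atTop (nhds 0) := by
    have heq : ∀ n : ℕ, L (hn n) - lam • hn n
        = (n : ℝ)⁻¹ • (∑ i ∈ range n, (lam ^ i)⁻¹ • (L (T i) - T (i + 1)))
          + (n : ℝ)⁻¹ • (lam • ((lam ^ n)⁻¹ • T n) - lam • T 0) := by
      intro n
      simp only [hn_def, map_smul, smul_comm lam ((n:ℝ)⁻¹), ← smul_sub, ← smul_add]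
      rw [key_identity L lam hlam T n, smul_sub]
    simp only [heq]
    simpa using hD.add hB
  -- subsequence
  have hnk : Tendsto nk atTop atTop := hmono.tendsto_atTop
  have h1 : Tendsto (fun j => L (hn (nk j)) - lam • hn (nk j)) atTop (nhds 0) :=
    hf.comp hnk
  have h2 : Tendsto (fun j => L (hn (nk j)) - lam • hn (nk j)) atTop
      (nhds (L h - lam • h)) :=
    ((L.continuous.tendsto h).comp hconv).sub (hconv.const_smul lam)
  have := tendsto_nhds_unique h2 h1
  rw [sub_eq_zero] at this
  exact this
end

section
/- Let X be a compact metric space, G : X → X a continuous surjection such that G^{-1}({x}) is finite for every x ∈ X, φ : X → ℝ continuous, λ > 0. Suppose ν is a Borel probability measure on X with ∫_X L_φψ dν = λ·∫_X ψ dν for every continuous ψ : X → ℝ, and h : X → [0, ∞) is continuous with L_φh = λ·h pointwise. Then the measure μ defined by μ(A) = ∫_A h dν for Borel sets A is invariant under G: ∫_X (ψ ∘ G) dμ = ∫_X ψ dμ for every continuous ψ, i.e. the pushforward of μ by G equals μ. -/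
open MeasureTheory

/-- If `ν` is an eigenmeasure of the dual transfer operator (`∫ L_φψ dν = λ∫ψ dν` for all
continuous `ψ`) and `h ≥ 0` is a continuous eigenfunction (`L_φh = λh`), then the measure
`μ = h·ν` is invariant under `G`. -/
theorem eigen_density_measure_invariant {X : Type*} [MetricSpace X] [CompactSpace X]
    [MeasurableSpace X] [BorelSpace X]
    (G : X → X) (hG : Continuous G) (hsurj : Function.Surjective G)
    (hfin : ∀ x : X, (G ⁻¹' {x}).Finite)
    (φ : X → ℝ) (hφ : Continuous φ) (lam : ℝ) (hlam : 0 < lam)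
    (ν : Measure X) [IsProbabilityMeasure ν]
    (hν : ∀ ψ : C(X, ℝ),
      ∫ x, (∑ y ∈ (hfin x).toFinset, Real.exp (φ y) * ψ y) ∂ν = lam * ∫ x, ψ x ∂ν)
    (h : X → ℝ) (hh : Continuous h) (hh0 : ∀ x, 0 ≤ h x)
    (heig : ∀ x, (∑ y ∈ (hfin x).toFinset, Real.exp (φ y) * h y) = lam * h x) :
    (∀ ψ : C(X, ℝ),
      ∫ x, ψ (G x) ∂(ν.withDensity fun x => ENNReal.ofReal (h x)) =
        ∫ x, ψ x ∂(ν.withDensity fun x => ENNReal.ofReal (h x)))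
    ∧ Measure.map G (ν.withDensity fun x => ENNReal.ofReal (h x)) =
        ν.withDensity fun x => ENNReal.ofReal (h x) := by
  set μ : Measure X := ν.withDensity fun x => ENNReal.ofReal (h x) with hμdef
  -- rewrite integrals over μ as weighted integrals over ν
  have hmeas : Measurable fun x => (h x).toNNReal :=
    (measurable_real_toNNReal.comp hh.measurable)
  have hwd : ∀ g : X → ℝ, ∫ x, g x ∂μ = ∫ x, h x * g x ∂ν := by
    intro g
    have : μ = ν.withDensity fun x => ((h x).toNNReal : ENNReal) := by
      simp [hμdef, ENNReal.ofReal]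
    rw [this, integral_withDensity_eq_integral_smul hmeas]
    refine integral_congr_ae (Filter.Eventually.of_forall fun x => ?_)
    simp [NNReal.smul_def, Real.coe_toNNReal _ (hh0 x)]
  -- part 1
  have key : ∀ ψ : C(X, ℝ), ∫ x, ψ (G x) ∂μ = ∫ x, ψ x ∂μ := by
    intro ψ
    have hψ₁ : Continuous fun x => ψ (G x) * h x :=
      (ψ.continuous.comp hG).mul hh
    have h1 := hν ⟨fun x => ψ (G x) * h x, hψ₁⟩
    -- pointwise: L_φ ((ψ∘G)·h) = ψ · (λ h)
    have h2 : ∀ x, (∑ y ∈ (hfin x).toFinset, Real.exp (φ y) * (ψ (G y) * h y))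
        = lam * (ψ x * h x) := by
      intro x
      have : ∀ y ∈ (hfin x).toFinset, Real.exp (φ y) * (ψ (G y) * h y)
          = ψ x * (Real.exp (φ y) * h y) := by
        intro y hy
        have hy' : G y = x := by simpa using (hfin x).mem_toFinset.mp hy
        rw [hy']; ring
      rw [Finset.sum_congr rfl this, ← Finset.mul_sum, heig x]; ring
    simp only [ContinuousMap.coe_mk] at h1
    have h3 : ∫ x, (∑ y ∈ (hfin x).toFinset, Real.exp (φ y) * (ψ (G y) * h y)) ∂ν
        = lam * ∫ x, ψ x * h x ∂ν := by
      rw [show (fun x => ∑ y ∈ (hfin x).toFinset, Real.exp (φ y) * (ψ (G y) * h y))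
        = fun x => lam * (ψ x * h x) from funext h2]
      exact integral_const_mul lam _
    have h4 : ∫ x, ψ (G x) * h x ∂ν = ∫ x, ψ x * h x ∂ν :=
      mul_left_cancel₀ hlam.ne' (h1.symm.trans h3)
    rw [hwd, hwd]
    simpa only [mul_comm] using h4
  refine ⟨key, ?_⟩
  -- μ is a finite measure
  have hbd : HasFiniteIntegral h ν := ((BoundedContinuousFunction.mkOfCompact ⟨h, hh⟩).integrable ν).2
  have hfinμ : IsFiniteMeasure μ := isFiniteMeasure_withDensity_ofReal hbd
  have hfinmap : IsFiniteMeasure (Measure.map G μ) := Measure.isFiniteMeasure_map μ G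
  refine ext_of_forall_lintegral_eq_of_IsFiniteMeasure fun f => ?_
  have hGm : Measurable G := hG.measurable
  rw [lintegral_map (f.measurable_coe_ennreal_comp) hGm]
  -- convert to real integrals
  have hi1 : Integrable (fun x => (f (G x) : ℝ)) μ :=
    ((BoundedContinuousFunction.mkOfCompact
      ⟨fun x => (f (G x) : ℝ), (NNReal.continuous_coe.comp f.continuous).comp hG⟩).integrable μ)
  have hi2 : Integrable (fun x => (f x : ℝ)) μ :=
    ((BoundedContinuousFunction.mkOfCompact
      ⟨fun x => (f x : ℝ), NNReal.continuous_coe.comp f.continuous⟩).integrable μ)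
  have e1 : ∫⁻ x, (f (G x) : ENNReal) ∂μ = ENNReal.ofReal (∫ x, (f (G x) : ℝ) ∂μ) := by
    simp_rw [← ENNReal.ofReal_coe_nnreal]
    rw [← ofReal_integral_eq_lintegral_ofReal hi1
      (Filter.Eventually.of_forall fun x => (f (G x)).2)]
  have e2 : ∫⁻ x, (f x : ENNReal) ∂μ = ENNReal.ofReal (∫ x, (f x : ℝ) ∂μ) := by
    simp_rw [← ENNReal.ofReal_coe_nnreal]
    rw [← ofReal_integral_eq_lintegral_ofReal hi2
      (Filter.Eventually.of_forall fun x => (f x).2)]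
  have hk := key ⟨fun x => (f x : ℝ), NNReal.continuous_coe.comp f.continuous⟩
  simp only [ContinuousMap.coe_mk] at hk
  rw [e1, e2, hk]
end

section
/- Let X be a compact metric space, G : X → X a continuous surjection such that G^{-1}({x}) is finite for every x ∈ X, and η a G-invariant Borel probability measure on X (η(G^{-1}(B)) = η(B) for all Borel B). Suppose J : X → (0, ∞) is a Borel function such that η(G(A)) = ∫_A J dη for every Borel set A on which G is injective. Then for η-almost every x ∈ X, Σ_{y ∈ G^{-1}({x})} 1/J(y) = 1. -/
open MeasureTheory
open scoped ENNReal

/-- Any point has a neighborhood in which it is the unique member of its fiber: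
the sets `E m` below are Borel and cover `X`. -/
private lemma exists_inj_partition {X : Type*} [MetricSpace X] [CompactSpace X]
    [MeasurableSpace X] [BorelSpace X]
    (G : X → X) (hG : Continuous G) (hfin : ∀ x : X, (G ⁻¹' {x}).Finite) :
    ∃ A : ℕ → Set X, (∀ n, MeasurableSet (A n)) ∧ Pairwise (Function.onFun Disjoint A) ∧
      (⋃ n, A n) = Set.univ ∧ ∀ n, Set.InjOn G (A n) := by
  classical
  cases isEmpty_or_nonempty X with
  | inl h =>
    refine ⟨fun _ => ∅, fun _ => MeasurableSet.empty, fun i j _ => by simp, ?_, fun n => by simp⟩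
    simp [Set.univ_eq_empty_iff.mpr h]
  | inr hne =>
    -- the "separated fiber" sets
    set E : ℕ → Set X := fun m => {y | ∀ z, G z = G y → z = y ∨ 1 / (m + 1 : ℝ) < dist y z}
      with hE
    have hEmeas : ∀ m, MeasurableSet (E m) := by
      intro m
      have hrw : E m = (⋃ k : ℕ, Prod.fst '' {p : X × X | G p.2 = G p.1 ∧
          1 / (k + 1 : ℝ) ≤ dist p.1 p.2 ∧ dist p.1 p.2 ≤ 1 / (m + 1 : ℝ)})ᶜ := by
        ext y
        simp only [hE, Set.mem_setOf_eq, Set.mem_compl_iff, Set.mem_iUnion, Set.mem_image,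
          Prod.exists, not_exists]
        constructor
        · rintro hy k a z ⟨⟨h1, h2, h3⟩, rfl⟩
          rcases hy z h1 with rfl | h4
          · simp only [dist_self] at h2
            have : (0:ℝ) < 1 / (k + 1 : ℝ) := by positivity
            linarith
          · linarith
        · intro hy z hz
          by_cases hzy : z = y
          · exact Or.inl hzy
          · right
            by_contra hlt
            push_neg at hlt
            have hd : 0 < dist y z := dist_pos.mpr (Ne.symm hzy)
            obtain ⟨k, hk⟩ := exists_nat_one_div_lt hd
            exact hy k y z ⟨⟨hz, le_of_lt hk, hlt⟩, rfl⟩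
      rw [hrw]
      refine (MeasurableSet.iUnion fun k => ?_).compl
      have hKclosed : IsClosed {p : X × X | G p.2 = G p.1 ∧
          1 / (k + 1 : ℝ) ≤ dist p.1 p.2 ∧ dist p.1 p.2 ≤ 1 / (m + 1 : ℝ)} := by
        refine IsClosed.inter (isClosed_eq (hG.comp continuous_snd) (hG.comp continuous_fst)) ?_
        exact IsClosed.inter (isClosed_le continuous_const continuous_dist)
          (isClosed_le continuous_dist continuous_const)
      exact ((hKclosed.isCompact.image continuous_fst).isClosed).measurableSet
    have hEcover : ∀ y : X, ∃ m, y ∈ E m := by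
      intro y
      set S : Set X := (G ⁻¹' {G y}) \ {y} with hS
      have hSfin : S.Finite := (hfin (G y)).subset Set.diff_subset
      rcases S.eq_empty_or_nonempty with hSe | hSne
      · refine ⟨0, fun z hz => Or.inl ?_⟩
        by_contra hzy
        have : z ∈ S := ⟨by simpa using hz, by simpa using hzy⟩
        simp [hSe] at this
      · set F : Finset ℝ := hSfin.toFinset.image (fun z => dist y z) with hF
        have hFne : F.Nonempty := by
          obtain ⟨z, hz⟩ := hSne
          exact ⟨dist y z, Finset.mem_image_of_mem _ (hSfin.mem_toFinset.mpr hz)⟩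
        have hεpos : 0 < F.min' hFne := by
          obtain ⟨z, hz, hzd⟩ := Finset.mem_image.mp (F.min'_mem hFne)
          have hzS : z ∈ S := hSfin.mem_toFinset.mp hz
          have : z ≠ y := by simpa [hS] using hzS.2
          rw [← hzd]
          exact dist_pos.mpr (Ne.symm this)
        obtain ⟨m, hm⟩ := exists_nat_one_div_lt hεpos
        refine ⟨m, fun z hz => ?_⟩
        by_cases hzy : z = y
        · exact Or.inl hzy
        · right
          have hzS : z ∈ S := ⟨by simpa using hz, by simpa using hzy⟩
          have : F.min' hFne ≤ dist y z :=
            F.min'_le _ (Finset.mem_image_of_mem _ (hSfin.mem_toFinset.mpr hzS))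
          linarith
    -- intersect with small balls around a dense sequence
    have : TopologicalSpace.SeparableSpace X := inferInstance
    set c : ℕ → X := TopologicalSpace.denseSeq X with hc
    have hcd : DenseRange c := TopologicalSpace.denseRange_denseSeq X
    set A' : ℕ × ℕ → Set X :=
      fun p => E p.1 ∩ Metric.closedBall (c p.2) (1 / (2 * (p.1 + 1 : ℝ))) with hA'
    have hA'meas : ∀ p, MeasurableSet (A' p) :=
      fun p => (hEmeas p.1).inter measurableSet_closedBall
    have hA'inj : ∀ p, Set.InjOn G (A' p) := by
      rintro ⟨m, i⟩ a ⟨haE, haB⟩ b ⟨hbE, hbB⟩ hab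
      have haB' : dist a (c i) ≤ 1 / (2 * (m + 1 : ℝ)) := Metric.mem_closedBall.mp haB
      have hbB' : dist b (c i) ≤ 1 / (2 * (m + 1 : ℝ)) := Metric.mem_closedBall.mp hbB
      have hdist : dist a b ≤ 1 / (m + 1 : ℝ) := by
        have h1 : dist a b ≤ dist a (c i) + dist b (c i) := dist_triangle_right a b (c i)
        have h2 : 1 / (2 * (m + 1 : ℝ)) + 1 / (2 * (m + 1 : ℝ)) = 1 / (m + 1 : ℝ) := by
          rw [← add_div, div_eq_div_iff (by positivity) (by positivity)]; ring
        linarith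
      rcases haE b hab.symm with h | h
      · exact h.symm
      · exfalso; linarith
    have hA'cover : ∀ y : X, ∃ p, y ∈ A' p := by
      intro y
      obtain ⟨m, hm⟩ := hEcover y
      have hr : (0:ℝ) < 1 / (2 * (m + 1 : ℝ)) := by positivity
      obtain ⟨i, hi⟩ := hcd.exists_dist_lt y hr
      exact ⟨⟨m, i⟩, hm, Metric.mem_closedBall.mpr hi.le⟩
    -- reindex by ℕ and disjointify
    set e : ℕ × ℕ ≃ ℕ := Denumerable.eqv (ℕ × ℕ) with he
    set A₀ : ℕ → Set X := fun n => A' (e.symm n) with hA₀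
    refine ⟨disjointed A₀, fun n => MeasurableSet.disjointed (fun k => hA'meas _) n,
      disjoint_disjointed _, ?_, fun n => (hA'inj _).mono (disjointed_subset _ _)⟩
    rw [iUnion_disjointed]
    apply Set.eq_univ_of_forall
    intro y
    obtain ⟨p, hp⟩ := hA'cover y
    exact Set.mem_iUnion.mpr ⟨e p, by simpa [hA₀] using hp⟩

/-- If `η` is a `G`-invariant Borel probability measure and `J > 0` is a Jacobian of `η`
with respect to `G`, then for `η`-almost every `x`, `Σ_{y ∈ G^{-1}(x)} 1/J(y) = 1`. -/
theorem sum_inv_jacobian_eq_one {X : Type*} [MetricSpace X] [CompactSpace X]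
    [MeasurableSpace X] [BorelSpace X]
    (G : X → X) (hG : Continuous G) (hsurj : Function.Surjective G)
    (hfin : ∀ x : X, (G ⁻¹' {x}).Finite)
    (η : Measure X) [IsProbabilityMeasure η]
    (hinv : ∀ B : Set X, MeasurableSet B → η (G ⁻¹' B) = η B)
    (J : X → ℝ) (hJm : Measurable J) (hJ0 : ∀ x, 0 < J x)
    (hJac : ∀ A : Set X, MeasurableSet A → Set.InjOn G A →
      η (G '' A) = ∫⁻ x in A, ENNReal.ofReal (J x) ∂η) :
    ∀ᵐ x ∂η, ∑ y ∈ (hfin x).toFinset, 1 / J y = 1 := by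
  classical
  obtain ⟨A, hAm, hAd, hAu, hAinj⟩ := exists_inj_partition G hG hfin
  have hGm : Measurable G := hG.measurable
  set Je : X → ℝ≥0∞ := fun x => ENNReal.ofReal (J x) with hJe
  have hJem : Measurable Je := hJm.ennreal_ofReal
  have hJe0 : ∀ x, Je x ≠ 0 := fun x => (ENNReal.ofReal_pos.mpr (hJ0 x)).ne'
  have hJetop : ∀ x, Je x ≠ ⊤ := fun x => ENNReal.ofReal_ne_top
  have hemb : ∀ n, MeasurableEmbedding ((A n).restrict G) :=
    fun n => ContinuousOn.measurableEmbedding (hAm n) hG.continuousOn (hAinj n)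
  set t : ℕ → X → ℝ≥0∞ :=
    fun n => Function.extend ((A n).restrict G) (fun y => (Je (y : X))⁻¹) 0 with ht
  have htm : ∀ n, Measurable (t n) := fun n =>
    (hemb n).measurable_extend ((hJem.comp measurable_subtype_coe).inv) measurable_const
  have himg : ∀ n, MeasurableSet (G '' A n) := fun n =>
    (hAm n).image_of_continuousOn_injOn hG.continuousOn (hAinj n)
  have htval : ∀ n, ∀ y (hy : y ∈ A n), t n (G y) = (Je y)⁻¹ := by
    intro n y hy
    have h1 : (A n).restrict G ⟨y, hy⟩ = G y := rfl
    show Function.extend ((A n).restrict G) (fun y => (Je (y : X))⁻¹) 0 (G y) = (Je y)⁻¹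
    rw [← h1, (hemb n).injective.extend_apply]
  have htzero : ∀ n x, x ∉ G '' A n → t n x = 0 := by
    intro n x hx
    show Function.extend ((A n).restrict G) (fun y => (Je (y : X))⁻¹) 0 x = 0
    rw [Function.extend_apply']
    · rfl
    · rintro ⟨a, ha⟩
      exact hx ⟨(a : X), a.2, ha⟩
  have hmap : ∀ n, Measure.map G ((η.restrict (A n)).withDensity Je) = η.restrict (G '' A n) := by
    intro n
    ext B hB
    have h1 : η (G '' (G ⁻¹' B ∩ A n)) = ∫⁻ x in G ⁻¹' B ∩ A n, Je x ∂η :=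
      hJac _ ((hGm hB).inter (hAm n)) ((hAinj n).mono Set.inter_subset_right)
    rw [Measure.map_apply hGm hB, withDensity_apply _ (hGm hB),
      Measure.restrict_restrict (hGm hB), ← h1, Set.image_preimage_inter,
      Measure.restrict_apply hB]
  have hstar : ∀ n, ∀ g : X → ℝ≥0∞, Measurable g →
      ∫⁻ x, g x * t n x ∂η = ∫⁻ y in A n, g (G y) ∂η := by
    intro n g hg
    calc ∫⁻ x, g x * t n x ∂η = ∫⁻ x in G '' A n, g x * t n x ∂η := by
          rw [← lintegral_indicator (himg n)]
          refine lintegral_congr fun x => ?_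
          by_cases hx : x ∈ G '' A n
          · rw [Set.indicator_of_mem hx]
          · rw [Set.indicator_of_notMem hx, htzero n x hx, mul_zero]
      _ = ∫⁻ x, g x * t n x ∂(Measure.map G ((η.restrict (A n)).withDensity Je)) := by
          rw [hmap n]
      _ = ∫⁻ y, g (G y) * t n (G y) ∂((η.restrict (A n)).withDensity Je) :=
          lintegral_map (hg.mul (htm n)) hGm
      _ = ∫⁻ y, (Je * fun y => g (G y) * t n (G y)) y ∂(η.restrict (A n)) :=
          lintegral_withDensity_eq_lintegral_mul _ hJem
            ((hg.comp hGm).mul ((htm n).comp hGm))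
      _ = ∫⁻ y in A n, g (G y) ∂η := by
          refine setLIntegral_congr_fun (hAm n) (fun y hy => ?_)
          simp only [Pi.mul_apply]
          rw [htval n y hy, mul_left_comm, ENNReal.mul_inv_cancel (hJe0 y) (hJetop y), mul_one]
  set T : X → ℝ≥0∞ := fun x => ∑' n, t n x with hT
  have hTm : Measurable T := Measurable.ennreal_tsum htm
  have hTfib : ∀ x, T x = ∑ y ∈ (hfin x).toFinset, (Je y)⁻¹ := by
    intro x
    have hterm : ∀ n, t n x = ∑ y ∈ (hfin x).toFinset, if y ∈ A n then (Je y)⁻¹ else 0 := by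
      intro n
      by_cases hx : x ∈ G '' A n
      · obtain ⟨y0, hy0, rfl⟩ := hx
        rw [htval n y0 hy0, Finset.sum_eq_single y0]
        · rw [if_pos hy0]
        · intro y hy hne
          rw [if_neg]
          intro hyA
          exact hne (hAinj n hyA hy0 (by simpa using (hfin (G y0)).mem_toFinset.mp hy))
        · intro hy0'
          exact absurd ((hfin (G y0)).mem_toFinset.mpr rfl) hy0'
      · rw [htzero n x hx, eq_comm]
        refine Finset.sum_eq_zero fun y hy => ?_
        rw [if_neg]
        intro hyA
        exact hx ⟨y, hyA, (hfin x).mem_toFinset.mp hy⟩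
    calc T x = ∑' n, ∑ y ∈ (hfin x).toFinset, (if y ∈ A n then (Je y)⁻¹ else 0) :=
          tsum_congr hterm
      _ = ∑ y ∈ (hfin x).toFinset, ∑' n, (if y ∈ A n then (Je y)⁻¹ else 0) :=
          Summable.tsum_finsetSum fun y _ => ENNReal.summable
      _ = ∑ y ∈ (hfin x).toFinset, (Je y)⁻¹ := by
          refine Finset.sum_congr rfl fun y _ => ?_
          obtain ⟨n0, hn0⟩ : ∃ n, y ∈ A n := Set.mem_iUnion.mp (hAu.symm ▸ Set.mem_univ y)
          rw [tsum_eq_single n0]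
          · rw [if_pos hn0]
          · intro m hm
            rw [if_neg]
            exact fun hmem => (Set.disjoint_left.mp (hAd hm) hmem) hn0
  have hmapη : Measure.map G η = η := Measure.ext fun B hB => by
    rw [Measure.map_apply hGm hB]; exact hinv B hB
  have claimA : ∀ g : X → ℝ≥0∞, Measurable g →
      ∫⁻ x, g x * T x ∂η = ∫⁻ x, g x ∂η := by
    intro g hg
    have hlast : ∫⁻ x, g x ∂η = ∫⁻ y, g (G y) ∂η := by
      conv_lhs => rw [← hmapη]
      exact lintegral_map hg hGm
    calc ∫⁻ x, g x * T x ∂η = ∫⁻ x, ∑' n, g x * t n x ∂η := by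
          simp_rw [hT, ENNReal.tsum_mul_left]
      _ = ∑' n, ∫⁻ x, g x * t n x ∂η :=
          lintegral_tsum fun n => (hg.mul (htm n)).aemeasurable
      _ = ∑' n, ∫⁻ y in A n, g (G y) ∂η := tsum_congr fun n => hstar n g hg
      _ = ∫⁻ y in ⋃ n, A n, g (G y) ∂η := (lintegral_iUnion hAm hAd _).symm
      _ = ∫⁻ y, g (G y) ∂η := by rw [hAu, Measure.restrict_univ]
      _ = ∫⁻ x, g x ∂η := hlast.symm
  -- ∫⁻ T over any measurable set s equals η s
  have hset : ∀ s : Set X, MeasurableSet s → ∫⁻ x in s, T x ∂η = η s := by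
    intro s hs
    have h1 := claimA (s.indicator 1) (measurable_one.indicator hs)
    rw [lintegral_indicator_one hs] at h1
    rw [← h1, ← lintegral_indicator hs]
    refine lintegral_congr fun x => ?_
    by_cases hx : x ∈ s
    · simp [Set.indicator_of_mem hx]
    · simp [Set.indicator_of_notMem hx]
  have hlt : η {x | T x < 1} = 0 := by
    set s := {x | T x < 1} with hs'
    have hs : MeasurableSet s := measurableSet_lt hTm measurable_const
    have hA1 : ∫⁻ x in s, T x ∂η = η s := hset s hs
    have h1int : ∫⁻ x, (1 : ℝ≥0∞) ∂(η.restrict s) = η s := by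
      rw [lintegral_one, Measure.restrict_apply_univ]
    have heq : T =ᵐ[η.restrict s] (fun _ => (1 : ℝ≥0∞)) := by
      refine ae_eq_of_ae_le_of_lintegral_le ?_ ?_ aemeasurable_const ?_
      · exact (ae_restrict_iff' hs).mpr (ae_of_all _ fun x hx => (le_of_lt hx))
      · rw [hA1]; exact (measure_lt_top η s).ne
      · rw [h1int, hA1]
    have hTset : MeasurableSet {x | ¬ T x = 1} := (hTm (measurableSet_singleton 1)).compl
    have h0 : η ({x | ¬ T x = 1} ∩ s) = 0 := by
      have h2 := ae_iff.mp heq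
      rwa [Measure.restrict_apply hTset] at h2
    refine measure_mono_null (fun x hx => ?_) h0
    exact ⟨ne_of_lt hx, hx⟩
  have hgt : η {x | 1 < T x} = 0 := by
    set s := {x | 1 < T x} with hs'
    have hs : MeasurableSet s := measurableSet_lt measurable_const hTm
    have hA1 : ∫⁻ x in s, T x ∂η = η s := hset s hs
    have h1int : ∫⁻ x, (1 : ℝ≥0∞) ∂(η.restrict s) = η s := by
      rw [lintegral_one, Measure.restrict_apply_univ]
    have heq : (fun _ => (1 : ℝ≥0∞)) =ᵐ[η.restrict s] T := by
      refine ae_eq_of_ae_le_of_lintegral_le ?_ ?_ hTm.aemeasurable ?_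
      · exact (ae_restrict_iff' hs).mpr (ae_of_all _ fun x hx => (le_of_lt hx))
      · rw [h1int]; exact (measure_lt_top η s).ne
      · rw [h1int, hA1]
    have hTset : MeasurableSet {x | ¬ T x = 1} := (hTm (measurableSet_singleton 1)).compl
    have h0 : η ({x | ¬ T x = 1} ∩ s) = 0 := by
      have h2 := ae_iff.mp heq.symm
      rwa [Measure.restrict_apply hTset] at h2
    refine measure_mono_null (fun x hx => ?_) h0
    exact ⟨ne_of_gt hx, hx⟩
  have hT1 : ∀ᵐ x ∂η, T x = 1 := by
    rw [ae_iff]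
    have hsub : {x | ¬ T x = 1} ⊆ {x | T x < 1} ∪ {x | 1 < T x} := fun x hx =>
      lt_or_gt_of_ne hx
    exact measure_mono_null hsub (measure_union_null hlt hgt)
  filter_upwards [hT1] with x hx
  rw [hTfib x] at hx
  have h2 : ∀ y, (Je y)⁻¹ = ENNReal.ofReal (1 / J y) := by
    intro y
    rw [one_div, ENNReal.ofReal_inv_of_pos (hJ0 y)]
  rw [Finset.sum_congr rfl (fun y _ => h2 y),
    ← ENNReal.ofReal_sum_of_nonneg (fun y _ => le_of_lt (div_pos one_pos (hJ0 y)))] at hx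
  exact ENNReal.ofReal_eq_one.mp hx
end
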